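/- Let G = ℤ² ⋊_A ℤ where A ∈ SL₂(ℤ) with |tr(A)| > 2. Then the subgroup ℤ² has upper exponential distortion in G: there exists c > 0 such that for every w ∈ ℤ², the word length of w in G satisfies |w|_G ≤ c·log(|w|_{ℤ²} + 1) + c. -/

import Mathlib

/-- Word length of `g` with respect to a generating set `S`. -/
noncomputable def wordLength {G : Type*} [Group G] (S : Set G) (g : G) : ℕ :=
  sInf {n : ℕ | ∃ l : List G, (∀ x ∈ l, x ∈ S) ∧ l.length = n ∧ l.prod = g}

/-- `ℤ²`, written multiplicatively. -/
abbrev Z2 := Multiplicative (Fin 2 → ℤ)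

/-- The action of `ℤ` on `ℤ²` in which the generator acts by `A ∈ SL₂(ℤ)`. -/
noncomputable def sdAction (A : Matrix.SpecialLinearGroup (Fin 2) ℤ) :
    Multiplicative ℤ →* MulAut Z2 :=
  zpowersHom (MulAut Z2)
    (AddEquiv.toMultiplicative (Matrix.SpecialLinearGroup.toLin' A).toAddEquiv)

/-- The semidirect product `G = ℤ² ⋊_A ℤ`. -/
noncomputable abbrev SolLike (A : Matrix.SpecialLinearGroup (Fin 2) ℤ) :=
  SemidirectProduct Z2 (Multiplicative ℤ) (sdAction A)

/-- The standard basis elements `b₁, b₂` of `ℤ²` inside `G`. -/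
noncomputable def bGen (A : Matrix.SpecialLinearGroup (Fin 2) ℤ) (i : Fin 2) : SolLike A :=
  SemidirectProduct.inl (Multiplicative.ofAdd (Pi.single i 1))

/-- The generator `z` of the `ℤ`-factor of `G`. -/
noncomputable def zGen (A : Matrix.SpecialLinearGroup (Fin 2) ℤ) : SolLike A :=
  SemidirectProduct.inr (Multiplicative.ofAdd 1)


open Finset



/-- `tau T k` plays the role of `tr(B^k)` where `tr B = T`. -/
def tauSeq (T : ℤ) : ℕ → ℤ
  | 0 => 2
  | 1 => T
  | (k+2) => T * tauSeq T (k+1) - tauSeq T k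

/-- `useq T k = tau T k` for `k ≥ 1`, and `useq T 0 = 1`. -/
def useq (T : ℤ) (k : ℕ) : ℤ := if k = 0 then 1 else tauSeq T k

lemma tauSeq_pos_two_mul {T : ℤ} (hT : 7 ≤ T) :
    ∀ k, 0 < tauSeq T k ∧ 2 * tauSeq T k ≤ tauSeq T (k+1) := by
  intro k
  induction k with
  | zero => constructor <;> simp [tauSeq] <;> omega
  | succ n ih =>
    obtain ⟨h1, h2⟩ := ih
    have hpos : 0 < tauSeq T (n+1) := by omega
    refine ⟨hpos, ?_⟩
    have : tauSeq T (n+2) = T * tauSeq T (n+1) - tauSeq T n := rfl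
    nlinarith [mul_le_mul_of_nonneg_right hT hpos.le]

lemma useq_pos {T : ℤ} (hT : 7 ≤ T) (k : ℕ) : 0 < useq T k := by
  unfold useq; split
  · norm_num
  · exact (tauSeq_pos_two_mul hT k).1

lemma useq_two_mul {T : ℤ} (hT : 7 ≤ T) (k : ℕ) : 2 * useq T k ≤ useq T (k+1) := by
  match k with
  | 0 => simp [useq, tauSeq]; omega
  | (n+1) =>
    have := (tauSeq_pos_two_mul hT (n+1)).2
    simpa [useq] using this

lemma two_pow_le_useq {T : ℤ} (hT : 7 ≤ T) (k : ℕ) : 2 ^ k ≤ useq T k := by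
  induction k with
  | zero => simp [useq]
  | succ n ih =>
    calc (2:ℤ) ^ (n+1) = 2 * 2 ^ n := by ring
    _ ≤ 2 * useq T n := by linarith
    _ ≤ useq T (n+1) := useq_two_mul hT n

lemma useq_succ_le {T : ℤ} (hT : 7 ≤ T) (k : ℕ) : useq T (k+1) ≤ T * useq T k := by
  match k with
  | 0 => simp [useq, tauSeq]
  | (n+1) =>
    have h := (tauSeq_pos_two_mul hT n).1
    have h2 : tauSeq T (n+1+1) = T * tauSeq T (n+1) - tauSeq T n := rfl
    simp only [useq, Nat.succ_ne_zero, if_false]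
    omega

lemma digits_exist {T : ℤ} (hT : 7 ≤ T) :
    ∀ (m : ℕ) (n : ℤ), |n| < useq T m →
      ∃ c : ℕ → ℤ, (∀ k, |c k| ≤ T) ∧ n = ∑ k ∈ Finset.range m, c k * useq T k := by
  intro m
  induction m with
  | zero =>
    intro n hn
    simp [useq] at hn
    refine ⟨0, fun k => by simp; omega, by simp; omega⟩
  | succ m ih =>
    intro n hn
    set u := useq T m with hu
    have hupos : 0 < u := useq_pos hT m
    set q := n / u with hq
    set r := n % u with hr
    have hr0 : 0 ≤ r := Int.emod_nonneg n hupos.ne'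
    have hru : r < u := Int.emod_lt_of_pos n hupos
    have hnTu : |n| < T * u := lt_of_lt_of_le hn (useq_succ_le hT m)
    have habs : |n| < T * u := hnTu
    have hql : -T ≤ q := by
      rw [hq, Int.le_ediv_iff_mul_le hupos]
      have := abs_lt.mp habs
      nlinarith
    have hqu : q ≤ T := by
      by_contra h
      push_neg at h
      have h' : T + 1 ≤ q := h
      rw [hq, Int.le_ediv_iff_mul_le hupos] at h'
      have := abs_lt.mp habs
      nlinarith
    have hqabs : |q| ≤ T := abs_le.mpr ⟨hql, hqu⟩
    obtain ⟨c', hc'1, hc'2⟩ := ih r (by rwa [abs_of_nonneg hr0])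
    refine ⟨fun k => if k = m then q else c' k, ?_, ?_⟩
    · intro k
      by_cases hk : k = m
      · simp [hk]; omega
      · simp [hk]; exact hc'1 k
    · rw [Finset.sum_range_succ]
      have hsum : ∑ k ∈ Finset.range m, (if k = m then q else c' k) * useq T k
          = ∑ k ∈ Finset.range m, c' k * useq T k := by
        apply Finset.sum_congr rfl
        intro k hk
        have : k ≠ m := (Finset.mem_range.mp hk).ne
        simp [this]
      rw [hsum]
      simp only [eq_self_iff_true, if_true]
      rw [← hc'2, ← hu]
      have heq : r + q * u = n := by
        rw [hr, hq, mul_comm]; exact Int.emod_add_mul_ediv n u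
      linarith


open Matrix

lemma sl2_add_inv (B : Matrix.SpecialLinearGroup (Fin 2) ℤ) :
    B.val + (B⁻¹).val = (Matrix.trace B.val) • 1 := by
  rw [show (B⁻¹).val = B.val.adjugate from rfl, Matrix.adjugate_fin_two]
  ext i j
  fin_cases i <;> fin_cases j <;> (simp [Matrix.trace_fin_two]; try ring)

lemma sl2_pow_add_inv_pow (B : Matrix.SpecialLinearGroup (Fin 2) ℤ) :
    ∀ k : ℕ, (B ^ k).val + (B⁻¹ ^ k).val = tauSeq (Matrix.trace B.val) k • 1 := by
  intro k
  induction k using Nat.twoStepInduction with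
  | zero =>
    show (1 : Matrix (Fin 2) (Fin 2) ℤ) + 1 = (2:ℤ) • 1
    rw [two_smul]
  | one => simpa [tauSeq] using sl2_add_inv B
  | more k ih1 ih2 =>
    set T := Matrix.trace B.val with hT
    have h1 : B.val * (B ^ (k+1)).val = (B ^ (k+2)).val := by
      rw [show (B ^ (k+2)).val = (B * B ^ (k+1)).val by congr 1; exact pow_succ' B (k+1)]; rfl
    have h2 : B.val * (B⁻¹ ^ (k+1)).val = (B⁻¹ ^ k).val := by
      rw [show (B⁻¹ ^ k).val = (B * B⁻¹ ^ (k+1)).val by congr 1; rw [pow_succ', mul_inv_cancel_left]]; rfl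
    have h3 : (B⁻¹).val * (B ^ (k+1)).val = (B ^ k).val := by
      rw [show (B ^ k).val = (B⁻¹ * B ^ (k+1)).val by congr 1; rw [pow_succ', inv_mul_cancel_left]]; rfl
    have h4 : (B⁻¹).val * (B⁻¹ ^ (k+1)).val = (B⁻¹ ^ (k+2)).val := by
      rw [show (B⁻¹ ^ (k+2)).val = (B⁻¹ * B⁻¹ ^ (k+1)).val by congr 1; exact pow_succ' B⁻¹ (k+1)]; rfl
    have key : (B.val + (B⁻¹).val) * ((B ^ (k+1)).val + (B⁻¹ ^ (k+1)).val)
        = ((B ^ (k+2)).val + (B⁻¹ ^ (k+2)).val) + ((B ^ k).val + (B⁻¹ ^ k).val) := by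
      rw [add_mul, mul_add, mul_add, h1, h2, h3, h4]; abel
    rw [sl2_add_inv B, ih2, ← hT, smul_mul_assoc, one_mul] at key
    have heq : (B ^ (k+2)).val + (B⁻¹ ^ (k+2)).val
        = T • (tauSeq T (k+1) • (1 : Matrix (Fin 2) (Fin 2) ℤ)) - ((B ^ k).val + (B⁻¹ ^ k).val) := by
      rw [eq_sub_iff_add_eq, key]
    rw [heq, ih1, smul_smul, ← sub_smul]
    rfl

lemma trace_sq (A : Matrix.SpecialLinearGroup (Fin 2) ℤ) :
    Matrix.trace (A * A : Matrix.SpecialLinearGroup (Fin 2) ℤ).val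
      = (Matrix.trace A.val)^2 - 2 := by
  have hdet : Matrix.det A.val = 1 := A.prop
  rw [show (A * A).val = A.val * A.val from rfl]
  rw [Matrix.det_fin_two] at hdet
  simp [Matrix.trace_fin_two, Matrix.mul_apply, Fin.sum_univ_succ]
  nlinarith [hdet]

lemma seven_le_T (A : Matrix.SpecialLinearGroup (Fin 2) ℤ)
    (htr : 2 < |Matrix.trace A.val|) :
    7 ≤ Matrix.trace (A * A : Matrix.SpecialLinearGroup (Fin 2) ℤ).val := by
  rw [trace_sq]
  have h3 : 3 ≤ |Matrix.trace A.val| := htr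
  nlinarith [sq_abs (Matrix.trace A.val), abs_nonneg (Matrix.trace A.val)]

open Matrix SemidirectProduct Multiplicative

lemma z_conj (A : Matrix.SpecialLinearGroup (Fin 2) ℤ) (w : Fin 2 → ℤ) :
    zGen A * inl (ofAdd w) * (zGen A)⁻¹ = inl (ofAdd (A.val *ᵥ w)) := by
  rw [zGen, show (inr (ofAdd 1) : SolLike A)⁻¹ = inr ((ofAdd (1:ℤ))⁻¹) from (map_inv _ _).symm,
    ← inl_aut]
  congr 1

lemma zinv_conj (A : Matrix.SpecialLinearGroup (Fin 2) ℤ) (w : Fin 2 → ℤ) :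
    (zGen A)⁻¹ * inl (ofAdd w) * zGen A = inl (ofAdd ((A⁻¹).val *ᵥ w)) := by
  have h := z_conj A ((A⁻¹).val *ᵥ w)
  rw [Matrix.mulVec_mulVec, show A.val * (A⁻¹).val = 1 from by
      rw [show A.val * (A⁻¹).val = (A * A⁻¹).val from rfl, mul_inv_cancel]; rfl,
    Matrix.one_mulVec] at h
  rw [← h]
  group

lemma inl_ofAdd_add (A : Matrix.SpecialLinearGroup (Fin 2) ℤ) (x y : Fin 2 → ℤ) :
    (inl (ofAdd (x + y)) : SolLike A) = inl (ofAdd x) * inl (ofAdd y) := by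
  rw [← _root_.map_mul]; rfl

lemma inl_ofAdd_zpow (A : Matrix.SpecialLinearGroup (Fin 2) ℤ) (x : Fin 2 → ℤ) (c : ℤ) :
    (inl (ofAdd x) : SolLike A) ^ c = inl (ofAdd (c • x)) := by
  rw [← map_zpow]
  congr 1

section Words
variable {H : Type*} [Group H]

def zpowList (g : H) (c : ℤ) : List H := List.replicate c.natAbs (if 0 ≤ c then g else g⁻¹)

lemma zpowList_prod (g : H) (c : ℤ) : (zpowList g c).prod = g ^ c := by
  rcases le_or_gt 0 c with h | h
  · rw [zpowList, if_pos h, List.prod_replicate, ← zpow_natCast,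
      Int.natCast_natAbs, abs_of_nonneg h]
  · rw [zpowList, if_neg (not_le.mpr h), List.prod_replicate, ← zpow_natCast,
      Int.natCast_natAbs, abs_of_neg h, _root_.inv_zpow, ← _root_.zpow_neg, neg_neg]

lemma zpowList_length (g : H) (c : ℤ) : (zpowList g c).length = c.natAbs := by
  simp [zpowList]

lemma zpowList_mem (g : H) (c : ℤ) (x : H) (hx : x ∈ zpowList g c) : x = g ∨ x = g⁻¹ := by
  rw [zpowList] at hx
  rcases List.eq_of_mem_replicate hx with h
  split at h
  · exact Or.inl h
  · exact Or.inr h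

def wrd (y g : H) : (ℕ → ℤ) → ℕ → List H
  | c, 0 => zpowList g (c 0)
  | c, (m+1) => y :: y :: (wrd y g (fun k => c (k+1)) m ++ y⁻¹ :: y⁻¹ :: zpowList g (c 0))

lemma wrd_mem (y g : H) : ∀ (c : ℕ → ℤ) (m : ℕ) (x : H), x ∈ wrd y g c m →
    x = y ∨ x = y⁻¹ ∨ x = g ∨ x = g⁻¹ := by
  intro c m
  induction m generalizing c with
  | zero =>
    intro x hx
    rcases zpowList_mem g (c 0) x hx with h | h
    · exact Or.inr (Or.inr (Or.inl h))
    · exact Or.inr (Or.inr (Or.inr h))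
  | succ m ih =>
    intro x hx
    simp only [wrd, List.mem_cons, List.mem_append] at hx
    rcases hx with h | h | (h | (h | h | h))
    · exact Or.inl h
    · exact Or.inl h
    · exact ih _ x h
    · exact Or.inr (Or.inl h)
    · exact Or.inr (Or.inl h)
    · rcases zpowList_mem g (c 0) x h with h' | h'
      · exact Or.inr (Or.inr (Or.inl h'))
      · exact Or.inr (Or.inr (Or.inr h'))

lemma wrd_length (y g : H) : ∀ (c : ℕ → ℤ) (m : ℕ),
    (wrd y g c m).length = 4 * m + ∑ k ∈ Finset.range (m+1), (c k).natAbs := by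
  intro c m
  induction m generalizing c with
  | zero => simp [wrd, zpowList_length]
  | succ m ih =>
    simp only [wrd, List.length_cons, List.length_append, ih, zpowList_length]
    rw [Finset.sum_range_succ' (fun k => (c k).natAbs) (m+1)]
    omega

end Words

open Matrix SemidirectProduct Multiplicative in
lemma mulVec_finset_sum (N : Matrix (Fin 2) (Fin 2) ℤ) (s : Finset ℕ) (f : ℕ → Fin 2 → ℤ) :
    N *ᵥ (∑ k ∈ s, f k) = ∑ k ∈ s, N *ᵥ f k := by
  classical
  induction s using Finset.induction with
  | empty => simp
  | insert _ _ h ih => rw [Finset.sum_insert h, Finset.sum_insert h, Matrix.mulVec_add, ih]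

open Matrix SemidirectProduct Multiplicative in
lemma wrd_prod (A : Matrix.SpecialLinearGroup (Fin 2) ℤ) (y : SolLike A)
    (M : Matrix (Fin 2) (Fin 2) ℤ)
    (hy : ∀ w : Fin 2 → ℤ, y * inl (ofAdd w) * y⁻¹ = inl (ofAdd (M *ᵥ w)))
    (i : Fin 2) : ∀ (c : ℕ → ℤ) (m : ℕ),
    (wrd y (bGen A i) c m).prod
      = inl (ofAdd (∑ k ∈ Finset.range (m+1),
          c k • ((M*M)^k *ᵥ Pi.single i 1))) := by
  intro c m
  induction m generalizing c with
  | zero =>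
    show (zpowList (bGen A i) (c 0)).prod = _
    rw [zpowList_prod, bGen, inl_ofAdd_zpow]
    congr 2
    rw [Finset.sum_range_one, pow_zero, Matrix.one_mulVec]
  | succ m ih =>
    show (y :: y :: (wrd y (bGen A i) (fun k => c (k+1)) m
        ++ y⁻¹ :: y⁻¹ :: zpowList (bGen A i) (c 0))).prod = _
    simp only [List.prod_cons, List.prod_append]
    rw [ih, zpowList_prod, bGen, inl_ofAdd_zpow]
    set S := ∑ k ∈ Finset.range (m+1), c (k+1) • ((M*M)^k *ᵥ Pi.single i 1) with hS
    have grp : ∀ P Q : SolLike A,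
        y * (y * (P * (y⁻¹ * (y⁻¹ * Q)))) = (y * (y * P * y⁻¹) * y⁻¹) * Q := by
      intro P Q; group
    rw [grp, hy, hy, ← inl_ofAdd_add]
    congr 2
    rw [Matrix.mulVec_mulVec]
    rw [mulVec_finset_sum]
    rw [Finset.sum_range_succ' (fun k => c k • ((M*M)^k *ᵥ Pi.single i 1)) (m+1)]
    congr 1
    · apply Finset.sum_congr rfl
      intro k _
      rw [Matrix.mulVec_smul, Matrix.mulVec_mulVec, ← pow_succ']
    · rw [pow_zero, Matrix.one_mulVec]

open Matrix SemidirectProduct Multiplicative in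
lemma coord_word_exists (A : Matrix.SpecialLinearGroup (Fin 2) ℤ)
    (htr : 2 < |Matrix.trace A.val|) (i : Fin 2) (n : ℤ) (m : ℕ)
    (hn : |n| < useq (Matrix.trace (A*A : Matrix.SpecialLinearGroup (Fin 2) ℤ).val) (m+1)) :
    ∃ l : List (SolLike A),
      (∀ x ∈ l, x = zGen A ∨ x = (zGen A)⁻¹ ∨ x = bGen A i ∨ x = (bGen A i)⁻¹) ∧
      l.prod = inl (ofAdd (n • Pi.single i 1)) ∧
      l.length ≤ 8*m + 2*(m+1)*(Matrix.trace (A*A : Matrix.SpecialLinearGroup (Fin 2) ℤ).val).natAbs := by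
  set Bm : Matrix.SpecialLinearGroup (Fin 2) ℤ := A * A with hBm
  set T : ℤ := Matrix.trace Bm.val with hTdef
  have hT : 7 ≤ T := seven_le_T A htr
  obtain ⟨c, hc1, hc2⟩ := digits_exist hT (m+1) n hn
  set c' : ℕ → ℤ := fun k => if k = 0 then 0 else c k with hc'
  refine ⟨wrd (zGen A) (bGen A i) c m ++ wrd (zGen A)⁻¹ (bGen A i) c' m, ?_, ?_, ?_⟩
  · intro x hx
    rcases List.mem_append.mp hx with h | h
    · exact wrd_mem _ _ _ _ _ h
    · rcases wrd_mem _ _ _ _ _ h with h' | h' | h' | h'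
      · exact Or.inr (Or.inl h')
      · rw [inv_inv] at h'; exact Or.inl h'
      · exact Or.inr (Or.inr (Or.inl h'))
      · exact Or.inr (Or.inr (Or.inr h'))
  · rw [List.prod_append]
    have hPy : ∀ w : Fin 2 → ℤ,
        zGen A * inl (ofAdd w) * (zGen A)⁻¹ = inl (ofAdd (A.val *ᵥ w)) := z_conj A
    have hQy : ∀ w : Fin 2 → ℤ,
        (zGen A)⁻¹ * inl (ofAdd w) * ((zGen A)⁻¹)⁻¹ = inl (ofAdd ((A⁻¹).val *ᵥ w)) := by
      intro w; rw [inv_inv]; exact zinv_conj A w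
    rw [wrd_prod A (zGen A) A.val hPy i c m, wrd_prod A (zGen A)⁻¹ (A⁻¹).val hQy i c' m,
      ← inl_ofAdd_add]
    congr 2
    have hMP : A.val * A.val = Bm.val := rfl
    have hMQ : (A⁻¹).val * (A⁻¹).val = (Bm⁻¹).val := by
      rw [show (Bm⁻¹ : Matrix.SpecialLinearGroup (Fin 2) ℤ) = A⁻¹ * A⁻¹ from by
        rw [hBm, _root_.mul_inv_rev]]
      rfl
    have hpowP : ∀ k : ℕ, (Bm.val)^k = (Bm^k).val := by
      intro k; induction k with
      | zero => rfl
      | succ k ih => rw [pow_succ, pow_succ, ih]; rfl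
    have hpowQ : ∀ k : ℕ, ((Bm⁻¹).val)^k = (Bm⁻¹^k).val := by
      intro k; induction k with
      | zero => rfl
      | succ k ih => rw [pow_succ, pow_succ, ih]; rfl
    rw [hMP, hMQ, ← Finset.sum_add_distrib]
    have hterm : ∀ k : ℕ,
        c k • ((Bm.val)^k *ᵥ Pi.single i 1) + c' k • (((Bm⁻¹).val)^k *ᵥ Pi.single i 1)
          = (c k * useq T k) • Pi.single i 1 := by
      intro k
      match k with
      | 0 =>
        simp only [hc', if_pos rfl, pow_zero, Matrix.one_mulVec, zero_smul, add_zero, useq]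
        norm_num
      | (k+1) =>
        have hne : (k+1) ≠ 0 := Nat.succ_ne_zero k
        simp only [hc', if_neg hne]
        rw [← smul_add, ← Matrix.add_mulVec, hpowP, hpowQ, sl2_pow_add_inv_pow Bm (k+1),
          ← hTdef, Matrix.smul_mulVec, Matrix.one_mulVec, smul_smul, useq, if_neg hne]
    calc ∑ k ∈ Finset.range (m+1),
          (c k • ((Bm.val)^k *ᵥ Pi.single i 1) + c' k • (((Bm⁻¹).val)^k *ᵥ Pi.single i 1))
        = ∑ k ∈ Finset.range (m+1), (c k * useq T k) • Pi.single i 1 := by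
          exact Finset.sum_congr rfl (fun k _ => hterm k)
      _ = (∑ k ∈ Finset.range (m+1), c k * useq T k) • Pi.single i 1 := by
          rw [Finset.sum_smul]
      _ = n • Pi.single i 1 := by rw [← hc2]
  · rw [List.length_append, wrd_length, wrd_length]
    have hb1 : ∑ k ∈ Finset.range (m+1), (c k).natAbs ≤ (m+1) * T.natAbs := by
      calc ∑ k ∈ Finset.range (m+1), (c k).natAbs
          ≤ ∑ _k ∈ Finset.range (m+1), T.natAbs := by
            apply Finset.sum_le_sum
            intro k _
            have h1 := hc1 k
            have h2 : |c k| = ((c k).natAbs : ℤ) := Int.abs_eq_natAbs _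
            have h3 : (T.natAbs : ℤ) = T := Int.natAbs_of_nonneg (by omega)
            omega
        _ = (m+1) * T.natAbs := by rw [Finset.sum_const, Finset.card_range]; ring
    have hb2 : ∑ k ∈ Finset.range (m+1), (c' k).natAbs ≤ (m+1) * T.natAbs := by
      calc ∑ k ∈ Finset.range (m+1), (c' k).natAbs
          ≤ ∑ _k ∈ Finset.range (m+1), T.natAbs := by
            apply Finset.sum_le_sum
            intro k _
            have h1 := hc1 k
            have h2 : |c k| = ((c k).natAbs : ℤ) := Int.abs_eq_natAbs _
            have h3 : (T.natAbs : ℤ) = T := Int.natAbs_of_nonneg (by omega)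
            have h4 : (c' k).natAbs ≤ (c k).natAbs := by
              by_cases hk : k = 0 <;> simp [hc', hk]
            omega
        _ = (m+1) * T.natAbs := by rw [Finset.sum_const, Finset.card_range]; ring
    have h2 : 2*(m+1)*T.natAbs = (m+1)*T.natAbs + (m+1)*T.natAbs := by ring
    omega

lemma wordLength_le {G : Type*} [Group G] (S : Set G) (g : G) (n : ℕ)
    (h : ∃ l : List G, (∀ x ∈ l, x ∈ S) ∧ l.prod = g ∧ l.length ≤ n) :
    wordLength S g ≤ n := by
  obtain ⟨l, h1, h2, h3⟩ := h
  exact le_trans (Nat.sInf_le ⟨l, h1, rfl, h2⟩) h3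

open Multiplicative in
lemma abs_coord_le_length (i : Fin 2) :
    ∀ l : List Z2,
      (∀ x ∈ l, x ∈ ({ofAdd (Pi.single 0 1), (ofAdd (Pi.single 0 1))⁻¹,
        ofAdd (Pi.single 1 1), (ofAdd (Pi.single 1 1))⁻¹} : Set Z2)) →
      |toAdd l.prod i| ≤ (l.length : ℤ) := by
  intro l
  induction l with
  | nil => intro _; simp
  | cons x t ih =>
    intro hmem
    have hx : |toAdd x i| ≤ 1 := by
      have hmx := hmem x List.mem_cons_self
      simp only [Set.mem_insert_iff, Set.mem_singleton_iff] at hmx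
      rcases hmx with h | h | h | h <;> subst h <;>
        fin_cases i <;>
          simp [toAdd_inv, toAdd_ofAdd, Pi.single_apply]
    have ht := ih (fun y hy => hmem y (List.mem_cons_of_mem x hy))
    have hprod : toAdd (x :: t).prod i = toAdd x i + toAdd t.prod i := by
      rw [List.prod_cons]; rfl
    rw [hprod, List.length_cons]
    calc |toAdd x i + toAdd t.prod i| ≤ |toAdd x i| + |toAdd t.prod i| := abs_add_le _ _
      _ ≤ 1 + (t.length : ℤ) := add_le_add hx ht
      _ = ((t.length + 1 : ℕ) : ℤ) := by push_cast; ring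

open Multiplicative in
lemma coord_le_wordLength (v : Fin 2 → ℤ) (i : Fin 2) :
    |v i| ≤ (wordLength ({ofAdd (Pi.single 0 1), (ofAdd (Pi.single 0 1))⁻¹,
        ofAdd (Pi.single 1 1), (ofAdd (Pi.single 1 1))⁻¹} : Set Z2) (ofAdd v) : ℤ) := by
  set S : Set Z2 := {ofAdd (Pi.single 0 1), (ofAdd (Pi.single 0 1))⁻¹,
        ofAdd (Pi.single 1 1), (ofAdd (Pi.single 1 1))⁻¹} with hS
  have hne : {n : ℕ | ∃ l : List Z2,
      (∀ x ∈ l, x ∈ S) ∧ l.length = n ∧ l.prod = ofAdd v}.Nonempty := by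
    refine ⟨(zpowList (ofAdd (Pi.single 0 1) : Z2) (v 0)
        ++ zpowList (ofAdd (Pi.single 1 1) : Z2) (v 1)).length,
      zpowList (ofAdd (Pi.single 0 1) : Z2) (v 0)
        ++ zpowList (ofAdd (Pi.single 1 1) : Z2) (v 1), ?_, rfl, ?_⟩
    · intro x hx
      rcases List.mem_append.mp hx with h | h
      · rcases zpowList_mem _ _ _ h with h' | h' <;> subst h' <;> simp [hS]
      · rcases zpowList_mem _ _ _ h with h' | h' <;> subst h' <;> simp [hS]
    · rw [List.prod_append, zpowList_prod, zpowList_prod, ← ofAdd_zsmul, ← ofAdd_zsmul,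
        ← ofAdd_add]
      congr 1
      ext j
      fin_cases j <;> simp [Pi.single_apply]
  obtain ⟨l, h1, h2, h3⟩ := Nat.sInf_mem hne
  have hlen := abs_coord_le_length i l h1
  rw [h3, toAdd_ofAdd] at hlen
  have : wordLength S (ofAdd v) = l.length := h2.symm
  rw [this]
  exact hlen


open Matrix SemidirectProduct Multiplicative

/-- If `A ∈ SL₂(ℤ)` has `|tr A| > 2`, then `ℤ²` has upper exponential
distortion in `G = ℤ² ⋊_A ℤ`: with respect to the generating set
`{b₁^{±1}, b₂^{±1}, z^{±1}}` of `G` and `{b₁^{±1}, b₂^{±1}}` of `ℤ²`, there is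
`c > 0` with `|w|_G ≤ c·log(|w|_{ℤ²} + 1) + c` for all `w ∈ ℤ²`. -/
theorem z2_upper_exponential_distortion (A : Matrix.SpecialLinearGroup (Fin 2) ℤ)
    (htr : 2 < |Matrix.trace (A : Matrix (Fin 2) (Fin 2) ℤ)|) :
    ∃ c : ℝ, 0 < c ∧ ∀ v : Fin 2 → ℤ,
      (wordLength
          ({bGen A 0, (bGen A 0)⁻¹, bGen A 1, (bGen A 1)⁻¹, zGen A, (zGen A)⁻¹} :
            Set (SolLike A))
          (SemidirectProduct.inl (Multiplicative.ofAdd v)) : ℝ)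
        ≤ c * Real.log
            ((wordLength
                ({Multiplicative.ofAdd (Pi.single 0 1),
                  (Multiplicative.ofAdd (Pi.single 0 1))⁻¹,
                  Multiplicative.ofAdd (Pi.single 1 1),
                  (Multiplicative.ofAdd (Pi.single 1 1))⁻¹} : Set Z2)
                (Multiplicative.ofAdd v) : ℝ) + 1) + c := by
  have hT : 7 ≤ Matrix.trace ((A*A : Matrix.SpecialLinearGroup (Fin 2) ℤ).val) :=
    seven_le_T A htr
  set T : ℤ := Matrix.trace ((A*A : Matrix.SpecialLinearGroup (Fin 2) ℤ).val) with hTdef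
  set C : ℕ := 16 + 8 * T.natAbs with hC
  have hlog2 : 0 < Real.log 2 := Real.log_pos one_lt_two
  set c : ℝ := (C : ℝ) / Real.log 2 + C + 1 with hc
  have hcpos : 0 < c := by
    rw [hc]
    have h1 : (0:ℝ) ≤ (C : ℝ) / Real.log 2 := by positivity
    have h2 : (0:ℝ) ≤ (C : ℝ) := by positivity
    linarith
  clear_value c
  refine ⟨c, hcpos, ?_⟩
  intro v
  set S6 : Set (SolLike A) :=
    {bGen A 0, (bGen A 0)⁻¹, bGen A 1, (bGen A 1)⁻¹, zGen A, (zGen A)⁻¹} with hS6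
  set L : ℕ := wordLength ({Multiplicative.ofAdd (Pi.single 0 1),
      (Multiplicative.ofAdd (Pi.single 0 1))⁻¹,
      Multiplicative.ofAdd (Pi.single 1 1),
      (Multiplicative.ofAdd (Pi.single 1 1))⁻¹} : Set Z2) (Multiplicative.ofAdd v) with hL
  have hvi : ∀ i, |v i| ≤ (L:ℤ) := fun i => coord_le_wordLength v i
  set m' : ℕ := Nat.log 2 L with hm'
  have hL2 : L < 2^(m'+1) := Nat.lt_pow_succ_log_self (by norm_num) L
  have hbound : ∀ i, |v i| < useq T ((m'+1)+1) := by
    intro i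
    calc |v i| ≤ (L:ℤ) := hvi i
      _ < (2:ℤ)^(m'+1) := by exact_mod_cast hL2
      _ ≤ (2:ℤ)^(m'+2) := by
          apply pow_le_pow_right₀ (by norm_num)
          omega
      _ ≤ useq T (m'+2) := two_pow_le_useq hT _
  obtain ⟨l0, hl0m, hl0p, hl0len⟩ := coord_word_exists A htr 0 (v 0) (m'+1) (hbound 0)
  obtain ⟨l1, hl1m, hl1p, hl1len⟩ := coord_word_exists A htr 1 (v 1) (m'+1) (hbound 1)
  rw [← hTdef] at hl0len hl1len
  have hwl : wordLength S6 (inl (ofAdd v)) ≤ C * (m'+1) := by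
    apply wordLength_le
    refine ⟨l0 ++ l1, ?_, ?_, ?_⟩
    · intro x hx
      rcases List.mem_append.mp hx with h | h
      · rcases hl0m x h with h' | h' | h' | h' <;> subst h' <;> simp [hS6]
      · rcases hl1m x h with h' | h' | h' | h' <;> subst h' <;> simp [hS6]
    · rw [List.prod_append, hl0p, hl1p, ← inl_ofAdd_add]
      congr 2
      ext j
      fin_cases j <;> simp [Pi.single_apply]
    · rw [List.length_append]
      have key : 2*(m'+1+1)*T.natAbs ≤ 4*(m'+1)*T.natAbs :=
        Nat.mul_le_mul_right _ (by omega)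
      have hCm : C * (m'+1) = 16*(m'+1) + 8*T.natAbs*(m'+1) := by rw [hC]; ring
      have e1 : 4*(m'+1)*T.natAbs + 4*(m'+1)*T.natAbs = 8*T.natAbs*(m'+1) := by ring
      omega
  have hlogL : 0 ≤ Real.log ((L:ℝ) + 1) := Real.log_nonneg (by
    have := Nat.cast_nonneg (α := ℝ) L
    linarith)
  have hm'log : (m' : ℝ) * Real.log 2 ≤ Real.log ((L:ℝ) + 1) := by
    rcases Nat.eq_zero_or_pos L with h0 | hLpos
    · rw [hm', h0]
      simp
    · have h1 : (2:ℝ)^(m' : ℕ) ≤ (L:ℝ) := by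
        exact_mod_cast Nat.pow_log_le_self 2 hLpos.ne'
      have hpow : (0:ℝ) < (2:ℝ)^(m' : ℕ) := by positivity
      have h2 : Real.log ((2:ℝ)^(m' : ℕ)) ≤ Real.log ((L:ℝ) + 1) :=
        Real.log_le_log hpow (by linarith)
      rwa [Real.log_pow] at h2
  calc (wordLength S6 (inl (ofAdd v)) : ℝ)
      ≤ ((C * (m'+1) : ℕ) : ℝ) := by exact_mod_cast hwl
    _ = (C:ℝ) * m' + C := by push_cast; ring
    _ ≤ ((C:ℝ)/Real.log 2) * Real.log ((L:ℝ) + 1) + C := by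
        have : (C:ℝ) * m' = ((C:ℝ)/Real.log 2) * ((m':ℝ) * Real.log 2) := by
          field_simp
        rw [this]
        have := mul_le_mul_of_nonneg_left hm'log (by positivity : (0:ℝ) ≤ (C:ℝ)/Real.log 2)
        linarith
    _ ≤ c * Real.log ((L:ℝ) + 1) + c := by
        have h1 : ((C:ℝ)/Real.log 2) ≤ c := by
          rw [hc]
          have : (0:ℝ) ≤ (C:ℝ) := by positivity
          linarith
        have h2 : (C:ℝ) ≤ c := by
          rw [hc]
          have : (0:ℝ) ≤ (C:ℝ)/Real.log 2 := by positivity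
          linarith
        have := mul_le_mul_of_nonneg_right h1 hlogL
        linarith
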